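/- There exists a constant α > 0, independent of d, such that for every positive multiple d of 8: Prob[f(σ) < d/1024] ≤ exp(−αd) and Prob[f'(σ) < d/1024] ≤ exp(−αd) under the uniform distribution on permutations σ of Fin(2d); consequently Prob[f(σ) ≥ d/1024 and f'(σ) ≥ d/1024] ≥ 1 − 2·exp(−αd). [This is the concentration step of Lemma 4.7: with probability 1 − 2e^{−αd} a uniformly random permutation σ has at least d/1024 good matched pairs between I₁ and I₃ and at least d/1024 good matched pairs between I₂ and I₄.] -/

import Mathlib

open Finset
/-- `f(σ)`: the number of indices `0 ≤ i < d/8` such that `σ(i) ∈ I₁ = {0,…,d/2−1}`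
and `σ(d+i) ∈ I₃ = {d,…,3d/2−1}`, for `σ` a permutation of `Fin (2d)`. -/
def goodPairsF (d : ℕ) (σ : Equiv.Perm (Fin (2 * d))) : ℕ :=
  (Finset.univ.filter (fun i : Fin (d / 8) =>
      (σ ⟨i.val, by have := i.isLt; omega⟩).val < d / 2 ∧
      d ≤ (σ ⟨d + i.val, by have := i.isLt; omega⟩).val ∧
      (σ ⟨d + i.val, by have := i.isLt; omega⟩).val < d + d / 2)).card

/-- `f'(σ)`: the number of indices `0 ≤ i < d/8` such that `σ(d/2+i) ∈ I₂ = {d/2,…,d−1}`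
and `σ(3d/2+i) ∈ I₄ = {3d/2,…,2d−1}`, for `σ` a permutation of `Fin (2d)`. -/
def goodPairsF' (d : ℕ) (σ : Equiv.Perm (Fin (2 * d))) : ℕ :=
  (Finset.univ.filter (fun i : Fin (d / 8) =>
      d / 2 ≤ (σ ⟨d / 2 + i.val, by have := i.isLt; omega⟩).val ∧
      (σ ⟨d / 2 + i.val, by have := i.isLt; omega⟩).val < d ∧
      d + d / 2 ≤ (σ ⟨d + d / 2 + i.val, by have := i.isLt; omega⟩).val)).card


noncomputable def Tb : ℕ → ℕ → ℝ
  | 0, _ => 1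
  | r+1, 0 => (63/64 : ℝ) * Tb r 0
  | r+1, j+1 => (63/64 : ℝ) * Tb r (j+1) + (1/64 : ℝ) * Tb r j

lemma Tb_nonneg : ∀ r j, 0 ≤ Tb r j := by
  intro r
  induction r with
  | zero => intro j; simp [Tb]
  | succ r ih =>
    intro j
    cases j with
    | zero =>
      show (0:ℝ) ≤ (63/64 : ℝ) * Tb r 0
      have := ih 0; positivity
    | succ j =>
      show (0:ℝ) ≤ (63/64 : ℝ) * Tb r (j+1) + (1/64:ℝ) * Tb r j
      have h1 := ih (j+1); have h2 := ih j; positivity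

lemma Tb_mono : ∀ r j, Tb r j ≤ Tb r (j+1) := by
  intro r
  induction r with
  | zero => intro j; simp [Tb]
  | succ r ih =>
    intro j
    cases j with
    | zero =>
      show (63/64 : ℝ) * Tb r 0 ≤ (63/64 : ℝ) * Tb r 1 + (1/64 : ℝ) * Tb r 0
      have h1 := ih 0
      have h2 := Tb_nonneg r 0
      nlinarith
    | succ j =>
      show (63/64 : ℝ) * Tb r (j+1) + (1/64:ℝ) * Tb r j ≤
        (63/64 : ℝ) * Tb r (j+2) + (1/64:ℝ) * Tb r (j+1)
      have h1 := ih (j+1)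
      have h2 := ih j
      nlinarith

lemma Tb_le : ∀ r j, Tb r j ≤ 2^j * (127/128)^r := by
  intro r
  induction r with
  | zero => intro j; simp [Tb]; exact one_le_pow₀ (by norm_num)
  | succ r ih =>
    intro j
    cases j with
    | zero =>
      show (63/64 : ℝ) * Tb r 0 ≤ _
      calc (63/64 : ℝ) * Tb r 0 ≤ (63/64 : ℝ) * (2^0 * (127/128)^r) := by
            have := Tb_nonneg r 0; nlinarith [ih 0]
        _ ≤ 2^0 * (127/128)^(r+1) := by rw [pow_succ]; ring_nf; nlinarith [pow_nonneg (by norm_num : (0:ℝ) ≤ 127/128) r]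
    | succ j =>
      show (63/64 : ℝ) * Tb r (j+1) + (1/64:ℝ) * Tb r j ≤ _
      have h1 := ih (j+1)
      have h2 := ih j
      have hp : (0:ℝ) ≤ (127/128)^r := by positivity
      have h2p : (0:ℝ) < 2^j := by positivity
      calc (63/64 : ℝ) * Tb r (j+1) + (1/64:ℝ) * Tb r j
          ≤ (63/64 : ℝ) * (2^(j+1) * (127/128)^r) + (1/64:ℝ) * (2^j * (127/128)^r) := by nlinarith
        _ = 2^(j+1) * (127/128)^(r+1) := by ring

def okT {n : ℕ} : {m : ℕ} → Finset (Fin n) → (Fin m → Fin n × Fin n) → Prop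
  | 0, _, _ => True
  | _+1, V, w => (w 0).1 ∉ V ∧ (w 0).2 ∉ V ∧ (w 0).1 ≠ (w 0).2 ∧
      okT (insert (w 0).1 (insert (w 0).2 V)) (fun i => w i.succ)

instance okT_dec {n : ℕ} : ∀ {m : ℕ} (V : Finset (Fin n)) (w : Fin m → Fin n × Fin n),
    Decidable (okT V w)
  | 0, _, _ => .isTrue trivial
  | m+1, V, w =>
    haveI := okT_dec (insert (w 0).1 (insert (w 0).2 V)) (fun i : Fin m => w i.succ)
    inferInstanceAs (Decidable (_ ∧ _ ∧ _ ∧ _))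

lemma desc_helper (r k : ℕ) :
    r.descFactorial (k + 2) = (r * r - r) * ((r - 2).descFactorial k) := by
  match r with
  | 0 => simp [Nat.zero_descFactorial_succ]
  | 1 =>
    rw [Nat.succ_descFactorial_succ, Nat.zero_descFactorial_succ]
    simp
  | (s+2) =>
    rw [Nat.succ_descFactorial_succ, Nat.succ_descFactorial_succ]
    have : (s+2) * (s+2) - (s+2) = (s+2) * (s+1) := by ring_nf; omega
    rw [this]
    simp [Nat.mul_assoc]

lemma tuple_bound {n : ℕ} (A B : Finset (Fin n)) (hAB : Disjoint A B) :
    ∀ (m : ℕ) (V : Finset (Fin n)) (j : ℕ),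
      n + 8 * (V.card + 2 * m) ≤ 8 * A.card →
      n + 8 * (V.card + 2 * m) ≤ 8 * B.card →
      ((univ.filter (fun w : Fin m → Fin n × Fin n =>
          okT V w ∧ (univ.filter (fun i => (w i).1 ∈ A ∧ (w i).2 ∈ B)).card ≤ j)).card : ℝ)
        ≤ Tb m j * ((n - V.card).descFactorial (2 * m)) := by
  intro m
  induction m with
  | zero =>
    intro V j _ _
    have h1 : (univ.filter (fun w : Fin 0 → Fin n × Fin n =>
        okT V w ∧ (univ.filter (fun i => (w i).1 ∈ A ∧ (w i).2 ∈ B)).card ≤ j)).card ≤ 1 := by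
      calc _ ≤ (univ : Finset (Fin 0 → Fin n × Fin n)).card := Finset.card_filter_le _ _
        _ = 1 := by simp [Finset.card_univ]
    have h2 : Tb 0 j * ((n - V.card).descFactorial (2 * 0)) = 1 := by
      simp [Tb]
    rw [h2]
    exact_mod_cast h1
  | succ m ih =>
    intro V j hA hB
    -- pure arithmetic facts, proved before any let-bindings enter the context
    have hstepA : n + 8 * ((V.card + 2) + 2 * m) ≤ 8 * A.card := by omega
    have hstepB : n + 8 * ((V.card + 2) + 2 * m) ≤ 8 * B.card := by omega
    have hsA : n - V.card ≤ 8 * (A \ V).card := by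
      have := Finset.le_card_sdiff V A; omega
    have hsB : n - V.card ≤ 8 * (B \ V).card := by
      have := Finset.le_card_sdiff V B; omega
    set TJ := Tb m j with hTJ
    set TJ' := (if j = 0 then (0:ℝ) else Tb m (j-1)) with hTJ'
    have hTJ'nn : 0 ≤ TJ' := by
      rw [hTJ']; split
      · exact le_rfl
      · exact Tb_nonneg _ _
    have hTJnn : 0 ≤ TJ := Tb_nonneg _ _
    have hTJle : TJ' ≤ TJ := by
      rw [hTJ', hTJ]; split
      · exact Tb_nonneg _ _
      · rename_i h
        have hj1 : j - 1 + 1 = j := Nat.succ_pred_eq_of_pos (Nat.pos_of_ne_zero h)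
        calc Tb m (j-1) ≤ Tb m (j-1+1) := Tb_mono _ _
          _ = Tb m j := by rw [hj1]
    have hTbrec : Tb (m+1) j = (63/64 : ℝ) * TJ + (1/64 : ℝ) * TJ' := by
      cases j with
      | zero => simp [Tb, hTJ, hTJ']
      | succ jj => simp [Tb, hTJ, hTJ']
    set P := fun w : Fin (m+1) → Fin n × Fin n =>
      okT V w ∧ (univ.filter (fun i => (w i).1 ∈ A ∧ (w i).2 ∈ B)).card ≤ j with hP
    set allowed := (Vᶜ : Finset (Fin n)).offDiag with hallowed
    have hmemallowed : ∀ z : Fin n × Fin n,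
        z ∈ allowed ↔ (z.1 ∉ V ∧ z.2 ∉ V ∧ z.1 ≠ z.2) := by
      intro z
      simp [hallowed, Finset.mem_offDiag]
    have hfib : (univ.filter P).card
        = ∑ z ∈ (univ : Finset (Fin n × Fin n)),
            ((univ.filter P).filter (fun w => w 0 = z)).card :=
      Finset.card_eq_sum_card_fiberwise (fun w _ => mem_univ _)
    have hzero : ∀ z ∈ (univ : Finset (Fin n × Fin n)), z ∉ allowed →
        ((univ.filter P).filter (fun w => w 0 = z)).card = 0 := by
      intro z _ hz
      rw [Finset.card_eq_zero, Finset.filter_eq_empty_iff]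
      intro w hw hwz
      obtain ⟨hok, _⟩ := (Finset.mem_filter.mp hw).2
      obtain ⟨h1, h2, h3, _⟩ := hok
      exact hz ((hmemallowed z).mpr (by rw [← hwz]; exact ⟨h1, h2, h3⟩))
    have hsum : (univ.filter P).card
        = ∑ z ∈ allowed, ((univ.filter P).filter (fun w => w 0 = z)).card := by
      rw [hfib]
      exact (Finset.sum_subset (Finset.subset_univ allowed)
        (fun z hz hz2 => hzero z hz hz2)).symm
    -- per-fiber bound
    have hfiber : ∀ z ∈ allowed,
        (((univ.filter P).filter (fun w => w 0 = z)).card : ℝ)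
          ≤ (if z.1 ∈ A ∧ z.2 ∈ B then TJ' else TJ)
              * ((n - V.card - 2).descFactorial (2 * m)) := by
      intro z hz
      obtain ⟨hz1, hz2, hz3⟩ := (hmemallowed z).mp hz
      have hVcard : (insert z.1 (insert z.2 V)).card = V.card + 2 := by
        rw [Finset.card_insert_of_notMem, Finset.card_insert_of_notMem hz2]
        simp only [Finset.mem_insert]
        push_neg
        exact ⟨hz3, hz1⟩
      have hdesc2 : n - (insert z.1 (insert z.2 V)).card = n - V.card - 2 := by
        rw [hVcard, Nat.sub_sub]
      have hcnt : ∀ w : Fin (m+1) → Fin n × Fin n, w 0 = z →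
          (univ.filter (fun i => (w i).1 ∈ A ∧ (w i).2 ∈ B)).card
          = (if z.1 ∈ A ∧ z.2 ∈ B then 1 else 0)
            + (univ.filter (fun i : Fin m => (w i.succ).1 ∈ A ∧ (w i.succ).2 ∈ B)).card := by
        intro w hwz
        rw [Finset.card_filter, Finset.card_filter, Fin.sum_univ_succ, hwz]
      -- key: injection into the tail set + IH
      have key : ∀ j' : ℕ,
          (∀ w : Fin (m+1) → Fin n × Fin n, P w → w 0 = z →
            (univ.filter (fun i : Fin m => (w i.succ).1 ∈ A ∧ (w i.succ).2 ∈ B)).card ≤ j') →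
          (((univ.filter P).filter (fun w => w 0 = z)).card : ℝ)
            ≤ Tb m j' * ((n - V.card - 2).descFactorial (2 * m)) := by
        intro j' hj'
        have hsub : ((univ.filter P).filter (fun w => w 0 = z)).card
            ≤ (univ.filter (fun t : Fin m → Fin n × Fin n =>
                okT (insert z.1 (insert z.2 V)) t ∧
                (univ.filter (fun i => (t i).1 ∈ A ∧ (t i).2 ∈ B)).card ≤ j')).card := by
          apply Finset.card_le_card_of_injOn (fun w => fun i : Fin m => w i.succ)
          · intro w hw
            have hw1 := (Finset.mem_filter.mp hw).1
            have hwz : w 0 = z := (Finset.mem_filter.mp hw).2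
            have hPw : P w := (Finset.mem_filter.mp hw1).2
            obtain ⟨hok, hcard⟩ := hPw
            obtain ⟨h1, h2, h3, h4⟩ := hok
            rw [hwz] at h4
            rw [Finset.mem_coe, Finset.mem_filter]
            exact ⟨mem_univ _, h4, hj' w ⟨⟨h1, h2, h3, by rw [hwz]; exact h4⟩, hcard⟩ hwz⟩
          · intro w hw w' hw' heq
            funext i
            refine Fin.cases ?_ ?_ i
            · rw [(Finset.mem_filter.mp hw).2, (Finset.mem_filter.mp hw').2]
            · intro k
              exact congrFun heq k
        have hIH := ih (insert z.1 (insert z.2 V)) j'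
          (by rw [hVcard]; exact hstepA) (by rw [hVcard]; exact hstepB)
        rw [hdesc2] at hIH
        calc (((univ.filter P).filter (fun w => w 0 = z)).card : ℝ)
            ≤ _ := Nat.cast_le.mpr hsub
          _ ≤ _ := hIH
      by_cases hgood : z.1 ∈ A ∧ z.2 ∈ B
      · rw [if_pos hgood]
        cases j with
        | zero =>
          have hempty : ((univ.filter P).filter (fun w => w 0 = z)) = ∅ := by
            rw [Finset.filter_eq_empty_iff]
            intro w hw hwz
            have hPw : P w := (Finset.mem_filter.mp hw).2
            obtain ⟨_, hcard⟩ := hPw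
            rw [hcnt w hwz, if_pos hgood] at hcard
            exact Nat.not_succ_le_zero _ (by rwa [Nat.add_comm] at hcard)
          rw [hempty]
          have hTJ'0 : TJ' = 0 := by rw [hTJ']; simp
          rw [hTJ'0]
          simp
        | succ jj =>
          have hTJ'eq : TJ' = Tb m jj := by rw [hTJ']; simp
          rw [hTJ'eq]
          apply key jj
          intro w hPw hwz
          have hcard := hPw.2
          rw [hcnt w hwz, if_pos hgood] at hcard
          exact Nat.succ_le_succ_iff.mp (by rwa [Nat.add_comm] at hcard)
      · rw [if_neg hgood, hTJ]
        apply key j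
        intro w hPw hwz
        have hcard := hPw.2
        rw [hcnt w hwz, if_neg hgood] at hcard
        simpa using hcard
    -- summation
    have hN : allowed.card = (n - V.card) * (n - V.card) - (n - V.card) := by
      rw [hallowed, Finset.offDiag_card, Finset.card_compl, Fintype.card_fin]
    set g := (allowed.filter (fun z : Fin n × Fin n => z.1 ∈ A ∧ z.2 ∈ B)).card with hg
    have hgle : g ≤ allowed.card := Finset.card_le_card (Finset.filter_subset _ _)
    have hprod : (A \ V) ×ˢ (B \ V) ⊆ allowed.filter (fun z => z.1 ∈ A ∧ z.2 ∈ B) := by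
      intro z hz
      rw [Finset.mem_product, Finset.mem_sdiff, Finset.mem_sdiff] at hz
      obtain ⟨⟨hzA, hzV⟩, hzB, hzV2⟩ := hz
      rw [Finset.mem_filter]
      refine ⟨(hmemallowed z).mpr ⟨hzV, hzV2, ?_⟩, hzA, hzB⟩
      intro hcontra
      exact (Finset.disjoint_left.mp hAB hzA) (hcontra ▸ hzB)
    have hgN : allowed.card ≤ 64 * g := by
      have h1 : (A \ V).card * (B \ V).card ≤ g := by
        rw [hg, ← Finset.card_product]
        exact Finset.card_le_card hprod
      calc allowed.card = (n - V.card) * (n - V.card) - (n - V.card) := hN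
        _ ≤ (n - V.card) * (n - V.card) := Nat.sub_le _ _
        _ ≤ (8 * (A \ V).card) * (8 * (B \ V).card) := Nat.mul_le_mul hsA hsB
        _ = 64 * ((A \ V).card * (B \ V).card) := by ring
        _ ≤ 64 * g := Nat.mul_le_mul_left _ h1
    have hsplit : ∑ z ∈ allowed, ((if z.1 ∈ A ∧ z.2 ∈ B then TJ' else TJ)
          * (((n - V.card - 2).descFactorial (2 * m) : ℕ) : ℝ))
        = ((g : ℝ) * TJ' + ((allowed.card : ℝ) - g) * TJ)
            * (((n - V.card - 2).descFactorial (2 * m) : ℕ) : ℝ) := by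
      rw [← Finset.sum_mul]
      congr 1
      rw [Finset.sum_ite, Finset.sum_const, Finset.sum_const]
      have hadd := Finset.card_filter_add_card_filter_not
        (s := allowed) (p := fun z : Fin n × Fin n => z.1 ∈ A ∧ z.2 ∈ B)
      have hneg : (allowed.filter (fun z : Fin n × Fin n => ¬(z.1 ∈ A ∧ z.2 ∈ B))).card
          = allowed.card - g := by
        rw [← hg] at hadd
        exact Nat.eq_sub_of_add_eq' hadd
      rw [hneg, nsmul_eq_mul, nsmul_eq_mul, Nat.cast_sub hgle]
    have hfinal : (g : ℝ) * TJ' + ((allowed.card : ℝ) - g) * TJ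
        ≤ (allowed.card : ℝ) * ((63/64 : ℝ) * TJ + (1/64 : ℝ) * TJ') := by
      have c1 : (allowed.card : ℝ) ≤ 64 * g := by exact_mod_cast hgN
      have c2 : (g : ℝ) ≤ allowed.card := by exact_mod_cast hgle
      nlinarith [c1, c2, hTJle, hTJ'nn, hTJnn]
    have hdescfin : ((allowed.card : ℕ) : ℝ)
          * (((n - V.card - 2).descFactorial (2 * m) : ℕ) : ℝ)
        = (((n - V.card).descFactorial (2 * (m + 1)) : ℕ) : ℝ) := by
      rw [hN]
      have h2m : 2 * (m + 1) = 2 * m + 2 := by ring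
      rw [h2m, desc_helper]
      push_cast
      ring
    calc ((univ.filter P).card : ℝ)
        = ∑ z ∈ allowed, (((univ.filter P).filter (fun w => w 0 = z)).card : ℝ) := by
          rw [hsum]; push_cast; ring
      _ ≤ ∑ z ∈ allowed, ((if z.1 ∈ A ∧ z.2 ∈ B then TJ' else TJ)
            * (((n - V.card - 2).descFactorial (2 * m) : ℕ) : ℝ)) :=
          Finset.sum_le_sum hfiber
      _ = ((g : ℝ) * TJ' + ((allowed.card : ℝ) - g) * TJ)
            * (((n - V.card - 2).descFactorial (2 * m) : ℕ) : ℝ) := hsplit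
      _ ≤ ((allowed.card : ℝ) * ((63/64 : ℝ) * TJ + (1/64 : ℝ) * TJ'))
            * (((n - V.card - 2).descFactorial (2 * m) : ℕ) : ℝ) := by
          apply mul_le_mul_of_nonneg_right hfinal (by positivity)
      _ = ((63/64 : ℝ) * TJ + (1/64 : ℝ) * TJ')
            * (((allowed.card : ℕ) : ℝ)
                * (((n - V.card - 2).descFactorial (2 * m) : ℕ) : ℝ)) := by ring
      _ = Tb (m+1) j * (((n - V.card).descFactorial (2 * (m + 1)) : ℕ) : ℝ) := by
          rw [hdescfin, hTbrec]

lemma okT_of {n : ℕ} : ∀ {m : ℕ} (V : Finset (Fin n)) (w : Fin m → Fin n × Fin n),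
    (∀ i, (w i).1 ∉ V) → (∀ i, (w i).2 ∉ V) →
    (∀ i i', (w i).1 ≠ (w i').2) →
    (Function.Injective fun i => (w i).1) →
    (Function.Injective fun i => (w i).2) →
    okT V w
  | 0, _, _, _, _, _, _, _ => trivial
  | m+1, V, w, h1, h2, h3, h4, h5 => by
    refine ⟨h1 0, h2 0, h3 0 0, ?_⟩
    apply okT_of
    · intro i
      simp only [Finset.mem_insert]
      push_neg
      refine ⟨?_, ?_, h1 _⟩
      · intro hc; exact (Fin.succ_ne_zero i) (h4 hc)
      · exact h3 i.succ 0
    · intro i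
      simp only [Finset.mem_insert]
      push_neg
      refine ⟨?_, ?_, h2 _⟩
      · exact fun hc => (h3 0 i.succ) hc.symm
      · intro hc; exact (Fin.succ_ne_zero i) (h5 hc)
    · intro i i'; exact h3 i.succ i'.succ
    · intro i i' hc; exact Fin.succ_injective _ (h4 hc)
    · intro i i' hc; exact Fin.succ_injective _ (h5 hc)

lemma card_fixing {n : ℕ} (S : Finset (Fin n)) :
    (univ.filter (fun τ : Equiv.Perm (Fin n) => ∀ s ∈ S, τ s = s)).card
      ≤ (n - S.card).factorial := by
  classical
  have hcard : (univ : Finset (Equiv.Perm {x : Fin n // x ∉ S})).card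
      = (n - S.card).factorial := by
    rw [Finset.card_univ, Fintype.card_perm]
    congr 1
    rw [Fintype.card_subtype_compl, Fintype.card_fin, Fintype.card_coe]
  rw [← hcard]
  have hiff : ∀ τ : Equiv.Perm (Fin n), (∀ s ∈ S, τ s = s) →
      ∀ x : Fin n, x ∉ S ↔ τ x ∉ S := by
    intro τ hτ x
    constructor
    · intro hx hc
      have := hτ _ hc
      have hxx : τ x = x := τ.injective this
      exact hx (by rwa [hxx] at hc)
    · intro hx hc
      exact hx (by rw [hτ x hc]; exact hc)
  apply Finset.card_le_card_of_injOn
    (fun τ => if h : ∀ s ∈ S, τ s = s then τ.subtypePerm (fun x => (hiff τ h x).symm) else 1)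
  · intro τ hτ
    exact mem_univ _
  · intro τ hτ τ' hτ' heq
    have h1 : ∀ s ∈ S, τ s = s := (Finset.mem_filter.mp hτ).2
    have h2 : ∀ s ∈ S, τ' s = s := (Finset.mem_filter.mp hτ').2
    simp only [dif_pos h1, dif_pos h2] at heq
    ext x
    by_cases hx : x ∈ S
    · rw [h1 x hx, h2 x hx]
    · have h4 : ((τ.subtypePerm (fun x => (hiff τ h1 x).symm)) ⟨x, hx⟩ : {x : Fin n // x ∉ S}).val
          = ((τ'.subtypePerm (fun x => (hiff τ' h2 x).symm)) ⟨x, hx⟩ : {x : Fin n // x ∉ S}).val := by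
        rw [heq]
      simp only [Equiv.Perm.subtypePerm_apply] at h4
      exact congrArg Fin.val h4

lemma perm_bound {n : ℕ} (m : ℕ) (a b : Fin m → Fin n)
    (hab : ∀ i i', a i ≠ b i') (ha : Function.Injective a) (hb : Function.Injective b)
    (A B : Finset (Fin n)) (hAB : Disjoint A B)
    (hA : n + 8 * (2 * m) ≤ 8 * A.card) (hB : n + 8 * (2 * m) ≤ 8 * B.card) (j : ℕ) :
    ((univ.filter (fun σ : Equiv.Perm (Fin n) =>
        (univ.filter (fun i => σ (a i) ∈ A ∧ σ (b i) ∈ B)).card ≤ j)).card : ℝ)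
      ≤ Tb m j * (Nat.factorial n) := by
  classical
  have hAn : A.card ≤ n := by
    have := Finset.card_le_univ A
    rwa [Fintype.card_fin] at this
  have h2mn : 2 * m ≤ n := by omega
  set W := (univ.filter (fun w : Fin m → Fin n × Fin n =>
      okT ∅ w ∧ (univ.filter (fun i => (w i).1 ∈ A ∧ (w i).2 ∈ B)).card ≤ j))
    with hW
  set s := (univ.filter (fun σ : Equiv.Perm (Fin n) =>
      (univ.filter (fun i => σ (a i) ∈ A ∧ σ (b i) ∈ B)).card ≤ j)) with hs
  have hmap : ∀ σ ∈ s, (fun i : Fin m => (σ (a i), σ (b i))) ∈ W := by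
    intro σ hσ
    rw [hW, Finset.mem_filter]
    refine ⟨mem_univ _, ?_, ?_⟩
    · apply okT_of
      · intro i; exact Finset.notMem_empty _
      · intro i; exact Finset.notMem_empty _
      · intro i i'; exact fun hc => hab i i' (σ.injective hc)
      · intro i i' hc; exact ha (σ.injective hc)
      · intro i i' hc; exact hb (σ.injective hc)
    · exact (Finset.mem_filter.mp hσ).2
  have hfib : s.card = ∑ w ∈ W, (s.filter
      (fun σ => (fun i : Fin m => (σ (a i), σ (b i))) = w)).card :=
    Finset.card_eq_sum_card_fiberwise hmap
  have hfiber : ∀ w ∈ W, (s.filter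
      (fun σ => (fun i : Fin m => (σ (a i), σ (b i))) = w)).card
      ≤ (n - 2 * m).factorial := by
    intro w hw
    by_cases hne : (s.filter
        (fun σ => (fun i : Fin m => (σ (a i), σ (b i))) = w)).Nonempty
    · obtain ⟨σ₀, hσ₀⟩ := hne
      have hσ₀w : (fun i : Fin m => (σ₀ (a i), σ₀ (b i))) = w :=
        (Finset.mem_filter.mp hσ₀).2
      set S : Finset (Fin n) :=
        (univ.image (fun i : Fin m => σ₀ (a i))) ∪ (univ.image (fun i : Fin m => σ₀ (b i)))
        with hS
      have hScard : S.card = 2 * m := by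
        rw [hS, Finset.card_union_of_disjoint, Finset.card_image_of_injective,
          Finset.card_image_of_injective, Finset.card_univ, Fintype.card_fin]
        · omega
        · exact fun x y hxy => hb (σ₀.injective hxy)
        · exact fun x y hxy => ha (σ₀.injective hxy)
        · rw [Finset.disjoint_left]
          intro x hx hx'
          obtain ⟨i, _, hi⟩ := Finset.mem_image.mp hx
          obtain ⟨i', _, hi'⟩ := Finset.mem_image.mp hx'
          exact hab i i' (σ₀.injective (hi.trans hi'.symm))
      calc (s.filter (fun σ => (fun i : Fin m => (σ (a i), σ (b i))) = w)).card
          ≤ (univ.filter (fun τ : Equiv.Perm (Fin n) => ∀ x ∈ S, τ x = x)).card := by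
            apply Finset.card_le_card_of_injOn (fun σ => σ * σ₀⁻¹)
            · intro σ hσ
              have hσw : (fun i : Fin m => (σ (a i), σ (b i))) = w :=
                (Finset.mem_filter.mp hσ).2
              rw [Finset.mem_coe, Finset.mem_filter]
              refine ⟨mem_univ _, ?_⟩
              intro x hx
              rw [hS, Finset.mem_union] at hx
              rcases hx with hx | hx
              · obtain ⟨i, _, hi⟩ := Finset.mem_image.mp hx
                have e1 : σ (a i) = (w i).1 := by
                  rw [← hσw]
                have e2 : σ₀ (a i) = (w i).1 := by
                  rw [← hσ₀w]
                rw [← hi]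
                show σ (σ₀⁻¹ (σ₀ (a i))) = σ₀ (a i)
                rw [show σ₀⁻¹ (σ₀ (a i)) = a i from σ₀.symm_apply_apply _, e1, e2]
              · obtain ⟨i, _, hi⟩ := Finset.mem_image.mp hx
                have e1 : σ (b i) = (w i).2 := by
                  rw [← hσw]
                have e2 : σ₀ (b i) = (w i).2 := by
                  rw [← hσ₀w]
                rw [← hi]
                show σ (σ₀⁻¹ (σ₀ (b i))) = σ₀ (b i)
                rw [show σ₀⁻¹ (σ₀ (b i)) = b i from σ₀.symm_apply_apply _, e1, e2]
            · intro σ hσ σ' hσ' heq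
              exact mul_right_cancel heq
        _ ≤ (n - S.card).factorial := card_fixing S
        _ = (n - 2 * m).factorial := by rw [hScard]
    · rw [Finset.not_nonempty_iff_eq_empty] at hne
      rw [hne]
      simp
  have htup := tuple_bound A B hAB m ∅ j (by simpa using hA) (by simpa using hB)
  have hWcard : (W.card : ℝ) ≤ Tb m j * (n.descFactorial (2 * m)) := by
    simpa using htup
  have hTbnn : 0 ≤ Tb m j := Tb_nonneg m j
  calc (s.card : ℝ)
      = ∑ w ∈ W, ((s.filter
          (fun σ => (fun i : Fin m => (σ (a i), σ (b i))) = w)).card : ℝ) := by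
        rw [hfib]; push_cast; ring
    _ ≤ ∑ w ∈ W, ((n - 2 * m).factorial : ℝ) := by
        apply Finset.sum_le_sum
        intro w hw
        exact_mod_cast hfiber w hw
    _ = (W.card : ℝ) * ((n - 2 * m).factorial : ℝ) := by
        rw [Finset.sum_const, nsmul_eq_mul]
    _ ≤ (Tb m j * (n.descFactorial (2 * m))) * ((n - 2 * m).factorial : ℝ) := by
        apply mul_le_mul_of_nonneg_right hWcard (by positivity)
    _ = Tb m j * (((n - 2 * m).factorial * n.descFactorial (2 * m) : ℕ) : ℝ) := by
        push_cast; ring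
    _ = Tb m j * (Nat.factorial n) := by
        rw [Nat.factorial_mul_descFactorial h2mn]


lemma Tb_exp (m j : ℕ) (h : 128 * j ≤ m) : Tb m j ≤ Real.exp (-((m:ℝ)/512)) := by
  have h1 : Tb m j ≤ 2^j * (127/128)^m := Tb_le m j
  have l2 : Real.log 2 ≤ 3/4 := by nlinarith [Real.log_two_lt_d9]
  have l2nn : 0 ≤ Real.log 2 := Real.log_nonneg one_le_two
  have lp : Real.log (127/128) ≤ -(1/128 : ℝ) := by
    have := Real.log_le_sub_one_of_pos (x := (127/128:ℝ)) (by norm_num)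
    linarith
  have e2 : (2:ℝ)^j = Real.exp ((j:ℝ) * Real.log 2) := by
    rw [Real.exp_nat_mul, Real.exp_log (by norm_num : (0:ℝ) < 2)]
  have e3 : ((127:ℝ)/128)^m = Real.exp ((m:ℝ) * Real.log (127/128)) := by
    rw [Real.exp_nat_mul, Real.exp_log (by norm_num : (0:ℝ) < 127/128)]
  have hj : (j:ℝ) ≤ (m:ℝ)/128 := by
    have : (128:ℝ) * j ≤ m := by exact_mod_cast h
    linarith
  have t1 : (j:ℝ) * Real.log 2 ≤ ((m:ℝ)/128) * (3/4) := by
    have := mul_le_mul hj l2 l2nn (by positivity : (0:ℝ) ≤ (m:ℝ)/128)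
    linarith
  have t2 : (m:ℝ) * Real.log (127/128) ≤ (m:ℝ) * (-(1/128)) :=
    mul_le_mul_of_nonneg_left lp (Nat.cast_nonneg m)
  calc Tb m j ≤ 2^j * (127/128)^m := h1
    _ = Real.exp ((j:ℝ) * Real.log 2 + (m:ℝ) * Real.log (127/128)) := by
        rw [Real.exp_add, e2, e3]
    _ ≤ Real.exp (-((m:ℝ)/512)) := by
        apply Real.exp_le_exp.mpr
        linarith

lemma card_filter_lt (N c : ℕ) (h : c ≤ N) :
    (Finset.univ.filter (fun v : Fin N => v.val < c)).card = c := by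
  apply Finset.card_eq_of_bijective (fun i hi => (⟨i, lt_of_lt_of_le hi h⟩ : Fin N))
  · intro a ha
    exact ⟨a.val, (Finset.mem_filter.mp ha).2, Fin.ext rfl⟩
  · intro i hi
    exact Finset.mem_filter.mpr ⟨mem_univ _, hi⟩
  · intro i i' hi hi' heq
    exact congrArg Fin.val heq

lemma card_filter_Ico (N lo hi : ℕ) (hlo : lo ≤ hi) (h : hi ≤ N) :
    (Finset.univ.filter (fun v : Fin N => lo ≤ v.val ∧ v.val < hi)).card = hi - lo := by
  apply Finset.card_eq_of_bijective (fun i hi2 => (⟨lo + i, by omega⟩ : Fin N))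
  · intro a ha
    obtain ⟨h1, h2⟩ := (Finset.mem_filter.mp ha).2
    exact ⟨a.val - lo, by omega, Fin.ext (by simp; omega)⟩
  · intro i hi2
    refine Finset.mem_filter.mpr ⟨mem_univ _, ?_, ?_⟩
    · show lo ≤ lo + i; omega
    · show lo + i < hi; omega
  · intro i i' hi2 hi2' heq
    have := congrArg Fin.val heq
    simp only [Fin.val_mk] at this
    omega

lemma card_filter_ge (N c : ℕ) (h : c ≤ N) :
    (Finset.univ.filter (fun v : Fin N => c ≤ v.val)).card = N - c := by
  apply Finset.card_eq_of_bijective (fun i hi => (⟨c + i, by omega⟩ : Fin N))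
  · intro a ha
    have h1 := (Finset.mem_filter.mp ha).2
    have h2 := a.isLt
    exact ⟨a.val - c, by omega, Fin.ext (by simp; omega)⟩
  · intro i hi
    refine Finset.mem_filter.mpr ⟨mem_univ _, ?_⟩
    show c ≤ c + i; omega
  · intro i i' hi hi' heq
    have := congrArg Fin.val heq
    simp only [Fin.val_mk] at this
    omega

lemma main_event_bound (d : ℕ) (hd : 0 < d) (hdvd : 8 ∣ d)
    (a b : Fin (d/8) → Fin (2*d))
    (hab : ∀ i i', a i ≠ b i') (ha : Function.Injective a) (hb : Function.Injective b)
    (A B : Finset (Fin (2*d))) (hAB : Disjoint A B)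
    (hA : 2*d + 8*(2*(d/8)) ≤ 8*A.card) (hB : 2*d + 8*(2*(d/8)) ≤ 8*B.card)
    (g : Equiv.Perm (Fin (2*d)) → ℕ)
    (hg : ∀ σ, g σ = (univ.filter (fun i => σ (a i) ∈ A ∧ σ (b i) ∈ B)).card) :
    ((univ.filter (fun σ : Equiv.Perm (Fin (2*d)) => ((g σ : ℝ) < (d:ℝ)/1024))).card : ℝ)
      / (Nat.factorial (2*d)) ≤ Real.exp (-(1/4096 * (d:ℝ))) := by
  have hb1 := perm_bound (n := 2*d) (d/8) a b hab ha hb A B hAB hA hB ((d-1)/1024)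
  have hsub : (univ.filter (fun σ : Equiv.Perm (Fin (2*d)) => ((g σ : ℝ) < (d:ℝ)/1024)))
      ⊆ (univ.filter (fun σ : Equiv.Perm (Fin (2*d)) =>
          (univ.filter (fun i => σ (a i) ∈ A ∧ σ (b i) ∈ B)).card ≤ (d-1)/1024)) := by
    intro σ hσ
    have hlt : (g σ : ℝ) < (d:ℝ)/1024 := (Finset.mem_filter.mp hσ).2
    refine Finset.mem_filter.mpr ⟨mem_univ _, ?_⟩
    rw [← hg σ]
    have h1024 : (g σ : ℝ) * 1024 < d := by linarith
    have h2 : g σ * 1024 < d := by exact_mod_cast h1024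
    omega
  have hcard : ((univ.filter (fun σ : Equiv.Perm (Fin (2*d)) =>
        ((g σ : ℝ) < (d:ℝ)/1024))).card : ℝ)
      ≤ Tb (d/8) ((d-1)/1024) * (Nat.factorial (2*d)) := by
    calc ((univ.filter (fun σ : Equiv.Perm (Fin (2*d)) =>
          ((g σ : ℝ) < (d:ℝ)/1024))).card : ℝ)
        ≤ _ := Nat.cast_le.mpr (Finset.card_le_card hsub)
      _ ≤ _ := hb1
  have hTb : Tb (d/8) ((d-1)/1024) ≤ Real.exp (-(1/4096 * (d:ℝ))) := by
    have harg : 128 * ((d-1)/1024) ≤ d/8 := by omega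
    have h1 := Tb_exp (d/8) ((d-1)/1024) harg
    have hmr : ((d/8 : ℕ):ℝ) * 8 = (d:ℝ) := by
      exact_mod_cast congrArg (Nat.cast : ℕ → ℝ) (Nat.div_mul_cancel hdvd)
    have : -(((d/8:ℕ):ℝ))/512 = -(1/4096 * (d:ℝ)) := by
      rw [← hmr]; ring
    calc Tb (d/8) ((d-1)/1024) ≤ Real.exp (-((d/8:ℕ):ℝ)/512) := by
          convert h1 using 2; ring
      _ = Real.exp (-(1/4096 * (d:ℝ))) := by rw [this]
  have hfpos : (0:ℝ) < (Nat.factorial (2*d) : ℝ) := by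
    exact_mod_cast Nat.factorial_pos (2*d)
  rw [div_le_iff₀ hfpos]
  calc ((univ.filter (fun σ : Equiv.Perm (Fin (2*d)) =>
        ((g σ : ℝ) < (d:ℝ)/1024))).card : ℝ)
      ≤ Tb (d/8) ((d-1)/1024) * (Nat.factorial (2*d)) := hcard
    _ ≤ Real.exp (-(1/4096 * (d:ℝ))) * (Nat.factorial (2*d)) :=
        mul_le_mul_of_nonneg_right hTb (le_of_lt hfpos)


/-- Concentration: there is a constant `α > 0`, independent of `d`, such that for every
positive multiple `d` of `8`, under the uniform distribution on permutations of
`Fin (2d)`, `Prob[f < d/1024] ≤ exp(−αd)`, `Prob[f' < d/1024] ≤ exp(−αd)`, and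
consequently `Prob[f ≥ d/1024 and f' ≥ d/1024] ≥ 1 − 2 exp(−αd)`. -/
theorem concentration_goodPairs :
    ∃ α : ℝ, 0 < α ∧ ∀ d : ℕ, 0 < d → 8 ∣ d →
      (((Finset.univ.filter (fun σ : Equiv.Perm (Fin (2 * d)) =>
            (goodPairsF d σ : ℝ) < (d : ℝ) / 1024)).card : ℝ)
          / (Nat.factorial (2 * d) : ℝ) ≤ Real.exp (-(α * d))) ∧
      (((Finset.univ.filter (fun σ : Equiv.Perm (Fin (2 * d)) =>
            (goodPairsF' d σ : ℝ) < (d : ℝ) / 1024)).card : ℝ)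
          / (Nat.factorial (2 * d) : ℝ) ≤ Real.exp (-(α * d))) ∧
      (1 - 2 * Real.exp (-(α * d)) ≤
        ((Finset.univ.filter (fun σ : Equiv.Perm (Fin (2 * d)) =>
            (d : ℝ) / 1024 ≤ (goodPairsF d σ : ℝ) ∧
            (d : ℝ) / 1024 ≤ (goodPairsF' d σ : ℝ))).card : ℝ)
          / (Nat.factorial (2 * d) : ℝ)) := by
  refine ⟨1/4096, by norm_num, fun d hd hdvd => ?_⟩
  have s1 : ((Finset.univ.filter (fun σ : Equiv.Perm (Fin (2 * d)) =>
        (goodPairsF d σ : ℝ) < (d : ℝ) / 1024)).card : ℝ)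
      / (Nat.factorial (2 * d) : ℝ) ≤ Real.exp (-(1/4096 * (d:ℝ))) := by
    exact main_event_bound d hd hdvd
      (fun i => ⟨i.val, by have := i.isLt; omega⟩)
      (fun i => ⟨d + i.val, by have := i.isLt; omega⟩)
      (fun i i' h => by
        have := congrArg Fin.val h
        have h1 := i.isLt
        simp only [Fin.val_mk] at this
        omega)
      (fun x y h => by
        have h2 : (x.val : ℕ) = y.val := Fin.mk.inj h
        exact Fin.val_injective h2)
      (fun x y h => by
        have h2 : (d + x.val : ℕ) = d + y.val := Fin.mk.inj h
        exact Fin.val_injective (show (x.val:ℕ) = y.val by omega))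
      (univ.filter (fun v : Fin (2*d) => v.val < d/2))
      (univ.filter (fun v : Fin (2*d) => d ≤ v.val ∧ v.val < d + d/2))
      (Finset.disjoint_left.mpr (fun v hv hv2 => by
        have h1 := (Finset.mem_filter.mp hv).2
        have h2 := (Finset.mem_filter.mp hv2).2
        omega))
      (by rw [card_filter_lt (2*d) (d/2) (by omega)]; omega)
      (by rw [card_filter_Ico (2*d) d (d + d/2) (by omega) (by omega)]; omega)
      (goodPairsF d)
      (fun σ => by
        unfold goodPairsF
        congr 1
        apply Finset.filter_congr
        intro i _
        simp only [Finset.mem_filter, Finset.mem_univ, true_and, and_assoc])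
  have s2 : ((Finset.univ.filter (fun σ : Equiv.Perm (Fin (2 * d)) =>
        (goodPairsF' d σ : ℝ) < (d : ℝ) / 1024)).card : ℝ)
      / (Nat.factorial (2 * d) : ℝ) ≤ Real.exp (-(1/4096 * (d:ℝ))) := by
    exact main_event_bound d hd hdvd
      (fun i => ⟨d/2 + i.val, by have := i.isLt; omega⟩)
      (fun i => ⟨d + d/2 + i.val, by have := i.isLt; omega⟩)
      (fun i i' h => by
        have := congrArg Fin.val h
        have h1 := i.isLt
        simp only [Fin.val_mk] at this
        omega)
      (fun x y h => by
        have h2 : (d/2 + x.val : ℕ) = d/2 + y.val := Fin.mk.inj h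
        exact Fin.val_injective (show (x.val:ℕ) = y.val by omega))
      (fun x y h => by
        have h2 : (d + d/2 + x.val : ℕ) = d + d/2 + y.val := Fin.mk.inj h
        exact Fin.val_injective (show (x.val:ℕ) = y.val by omega))
      (univ.filter (fun v : Fin (2*d) => d/2 ≤ v.val ∧ v.val < d))
      (univ.filter (fun v : Fin (2*d) => d + d/2 ≤ v.val))
      (Finset.disjoint_left.mpr (fun v hv hv2 => by
        have h1 := (Finset.mem_filter.mp hv).2
        have h2 := (Finset.mem_filter.mp hv2).2
        omega))
      (by rw [card_filter_Ico (2*d) (d/2) d (by omega) (by omega)]; omega)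
      (by rw [card_filter_ge (2*d) (d + d/2) (by omega)]; omega)
      (goodPairsF' d)
      (fun σ => by
        unfold goodPairsF'
        congr 1
        apply Finset.filter_congr
        intro i _
        simp only [Finset.mem_filter, Finset.mem_univ, true_and, and_assoc])
  refine ⟨s1, s2, ?_⟩
  have hfpos : (0:ℝ) < (Nat.factorial (2*d) : ℝ) := by
    exact_mod_cast Nat.factorial_pos (2*d)
  have htot : (Finset.univ.filter (fun σ : Equiv.Perm (Fin (2 * d)) =>
        (d : ℝ) / 1024 ≤ (goodPairsF d σ : ℝ) ∧
        (d : ℝ) / 1024 ≤ (goodPairsF' d σ : ℝ))).card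
      + (Finset.univ.filter (fun σ : Equiv.Perm (Fin (2 * d)) =>
        ¬((d : ℝ) / 1024 ≤ (goodPairsF d σ : ℝ) ∧
          (d : ℝ) / 1024 ≤ (goodPairsF' d σ : ℝ)))).card = Nat.factorial (2*d) := by
    rw [Finset.card_filter_add_card_filter_not, Finset.card_univ,
      Fintype.card_perm, Fintype.card_fin]
  have hsubU : (Finset.univ.filter (fun σ : Equiv.Perm (Fin (2 * d)) =>
        ¬((d : ℝ) / 1024 ≤ (goodPairsF d σ : ℝ) ∧
          (d : ℝ) / 1024 ≤ (goodPairsF' d σ : ℝ))))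
      ⊆ (Finset.univ.filter (fun σ : Equiv.Perm (Fin (2 * d)) =>
            (goodPairsF d σ : ℝ) < (d : ℝ) / 1024))
        ∪ (Finset.univ.filter (fun σ : Equiv.Perm (Fin (2 * d)) =>
            (goodPairsF' d σ : ℝ) < (d : ℝ) / 1024)) := by
    intro σ hσ
    have h := (Finset.mem_filter.mp hσ).2
    rcases not_and_or.mp h with h | h
    · exact Finset.mem_union_left _ (Finset.mem_filter.mpr ⟨mem_univ _, not_le.mp h⟩)
    · exact Finset.mem_union_right _ (Finset.mem_filter.mpr ⟨mem_univ _, not_le.mp h⟩)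
  have hcardU : ((Finset.univ.filter (fun σ : Equiv.Perm (Fin (2 * d)) =>
        ¬((d : ℝ) / 1024 ≤ (goodPairsF d σ : ℝ) ∧
          (d : ℝ) / 1024 ≤ (goodPairsF' d σ : ℝ)))).card : ℝ)
      ≤ ((Finset.univ.filter (fun σ : Equiv.Perm (Fin (2 * d)) =>
            (goodPairsF d σ : ℝ) < (d : ℝ) / 1024)).card : ℝ)
        + ((Finset.univ.filter (fun σ : Equiv.Perm (Fin (2 * d)) =>
            (goodPairsF' d σ : ℝ) < (d : ℝ) / 1024)).card : ℝ) := by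
    have h1 := Finset.card_le_card hsubU
    have h2 := Finset.card_union_le
      (Finset.univ.filter (fun σ : Equiv.Perm (Fin (2 * d)) =>
            (goodPairsF d σ : ℝ) < (d : ℝ) / 1024))
      (Finset.univ.filter (fun σ : Equiv.Perm (Fin (2 * d)) =>
            (goodPairsF' d σ : ℝ) < (d : ℝ) / 1024))
    have := le_trans h1 h2
    exact_mod_cast this
  have hE1 : ((Finset.univ.filter (fun σ : Equiv.Perm (Fin (2 * d)) =>
        (goodPairsF d σ : ℝ) < (d : ℝ) / 1024)).card : ℝ)
      ≤ Real.exp (-(1/4096 * (d:ℝ))) * (Nat.factorial (2*d) : ℝ) :=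
    (div_le_iff₀ hfpos).mp s1
  have hE2 : ((Finset.univ.filter (fun σ : Equiv.Perm (Fin (2 * d)) =>
        (goodPairsF' d σ : ℝ) < (d : ℝ) / 1024)).card : ℝ)
      ≤ Real.exp (-(1/4096 * (d:ℝ))) * (Nat.factorial (2*d) : ℝ) :=
    (div_le_iff₀ hfpos).mp s2
  rw [le_div_iff₀ hfpos]
  have htotR : ((Finset.univ.filter (fun σ : Equiv.Perm (Fin (2 * d)) =>
        (d : ℝ) / 1024 ≤ (goodPairsF d σ : ℝ) ∧
        (d : ℝ) / 1024 ≤ (goodPairsF' d σ : ℝ))).card : ℝ)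
      + ((Finset.univ.filter (fun σ : Equiv.Perm (Fin (2 * d)) =>
        ¬((d : ℝ) / 1024 ≤ (goodPairsF d σ : ℝ) ∧
          (d : ℝ) / 1024 ≤ (goodPairsF' d σ : ℝ)))).card : ℝ) = (Nat.factorial (2*d) : ℝ) := by
    exact_mod_cast htot
  linarith
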